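/- Let p be a prime, n ≥ 1, V = (ZMod p)^n, and let f be a group automorphism of V. Equip V with the affine quandle operation x * y = x + f(y − x), and assume this quandle is simple: its only congruences are the equality relation and the all relation. If g : V → V is a bijection preserving * (a quandle automorphism) whose order is finite and coprime to p, then g has a fixed point. -/

import Mathlib

/-- A quandle structure on `Q`, given by its left translations: each `L x` is a
permutation of `Q`, `x * x = x`, and `x * (y * z) = (x * y) * (x * z)`
(writing `x * y` for `L x y`). -/
structure QuandleStr (Q : Type*) where
  L : Q → Equiv.Perm Q
  idem : ∀ x : Q, L x x = x
  selfDistrib : ∀ x y z : Q, L x (L y z) = L (L x y) (L x z)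

namespace QuandleStr

variable {Q : Type*} (S : QuandleStr Q)

/-- The left multiplication group `LMlt(Q)`, generated by all left translations. -/
def Lmlt : Subgroup (Equiv.Perm Q) :=
  Subgroup.closure (Set.range S.L)

/-- The displacement group `Dis(Q)`, generated by all `L x * (L y)⁻¹`. -/
def Dis : Subgroup (Equiv.Perm Q) :=
  Subgroup.closure {g : Equiv.Perm Q | ∃ x y : Q, g = S.L x * (S.L y)⁻¹}

/-- A congruence of the quandle: an equivalence relation compatible with `*` and `\`. -/
def IsCong (θ : Setoid Q) : Prop :=
  ∀ x y u v : Q, θ.r x y → θ.r u v →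
    θ.r (S.L x u) (S.L y v) ∧ θ.r ((S.L x)⁻¹ u) ((S.L y)⁻¹ v)

/-- A quandle is faithful if `x ↦ L x` is injective. -/
def Faithful : Prop := Function.Injective S.L

/-- A quandle is connected if `LMlt(Q)` acts transitively. -/
def Connected : Prop := ∀ x y : Q, ∃ g ∈ S.Lmlt, g x = y

/-- A quandle is latin if all right translations are bijective. -/
def Latin : Prop := ∀ y : Q, Function.Bijective fun x : Q => S.L x y

/-- `θ` is a minimal congruence: not equality, and the only congruence strictly
contained in it is equality. -/
def IsMinCong (θ : Setoid Q) : Prop :=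
  S.IsCong θ ∧ θ ≠ ⊥ ∧ ∀ β : Setoid Q, S.IsCong β → β < θ → β = ⊥

/-- `θ` is a maximal congruence: not the all relation, and the only congruence strictly
containing it is the all relation. -/
def IsMaxCong (θ : Setoid Q) : Prop :=
  S.IsCong θ ∧ θ ≠ ⊤ ∧ ∀ β : Setoid Q, S.IsCong β → θ < β → β = ⊤

/-- `Dis_α`: the subgroup generated by the `L x * (L y)⁻¹` with `x α y`. -/
def DisC (r : Q → Q → Prop) : Subgroup (Equiv.Perm Q) :=
  Subgroup.closure {g : Equiv.Perm Q | ∃ x y : Q, r x y ∧ g = S.L x * (S.L y)⁻¹}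

/-- `Dis^α`: the elements of `Dis(Q)` displacing every point inside its `α`-class. -/
def DisUp (θ : Setoid Q) : Subgroup (Equiv.Perm Q) where
  carrier := {g : Equiv.Perm Q | g ∈ S.Dis ∧ ∀ x : Q, θ.r (g x) x}
  one_mem' := ⟨S.Dis.one_mem, fun x => θ.iseqv.refl x⟩
  mul_mem' := by
    rintro a b ⟨ha, ha2⟩ ⟨hb, hb2⟩
    refine ⟨S.Dis.mul_mem ha hb, fun x => ?_⟩
    rw [Equiv.Perm.mul_apply]
    exact θ.iseqv.trans (ha2 (b x)) (hb2 x)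
  inv_mem' := by
    rintro a ⟨ha, ha2⟩
    refine ⟨S.Dis.inv_mem ha, fun x => ?_⟩
    have h := ha2 (a⁻¹ x)
    rw [show a (a⁻¹ x) = x from Equiv.apply_symm_apply a x] at h
    exact θ.iseqv.symm h

end QuandleStr

/-- The orbit equivalence relation of a subgroup of permutations. -/
def orbSetoid {Q : Type*} (N : Subgroup (Equiv.Perm Q)) : Setoid Q where
  r x y := ∃ n ∈ N, n x = y
  iseqv := by
    refine ⟨fun x => ⟨1, N.one_mem, rfl⟩, ?_, ?_⟩
    · rintro x y ⟨n, hn, rfl⟩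
      exact ⟨n⁻¹, N.inv_mem hn, Equiv.symm_apply_apply n x⟩
    · rintro x y z ⟨n, hn, rfl⟩ ⟨m, hm, rfl⟩
      exact ⟨m * n, N.mul_mem hm hn, Equiv.Perm.mul_apply m n x⟩

/-- The left translation `y ↦ x + f (y - x)` of the affine quandle `Aff(A, f)`. -/
def affL {A : Type*} [AddCommGroup A] (f : A ≃+ A) (x : A) : Equiv.Perm A where
  toFun y := x + f (y - x)
  invFun y := x + f.symm (y - x)
  left_inv y := by simp
  right_inv y := by simp

/-- The affine quandle `Aff(A, f)` with operation `x * y = x + f (y - x)`. -/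
def affQ {A : Type*} [AddCommGroup A] (f : A ≃+ A) : QuandleStr A where
  L := affL f
  idem x := by simp [affL]
  selfDistrib x y z := by
    show x + f ((y + f (z - y)) - x) = (x + f (y - x)) + f ((x + f (z - x)) - (x + f (y - x)))
    simp only [map_sub, map_add]
    abel


section Aux9

variable {A : Type*} [AddCommGroup A]

/-- The coset setoid of an additive subgroup. -/
def cosetSetoid9 (B : AddSubgroup A) : Setoid A where
  r x y := x - y ∈ B
  iseqv := by
    refine ⟨fun x => by simpa using B.zero_mem, fun {x y} h => ?_, fun {x y z} h1 h2 => ?_⟩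
    · have := B.neg_mem h; rwa [neg_sub] at this
    · have := B.add_mem h1 h2; rwa [sub_add_sub_cancel] at this

lemma cosetCong9 (f : A ≃+ A) (B : AddSubgroup A)
    (hB : ∀ x ∈ B, f x ∈ B) (hB' : ∀ x ∈ B, f.symm x ∈ B) :
    (affQ f).IsCong (cosetSetoid9 B) := by
  intro x y u v hxy huv
  constructor
  · show (x + f (u - x)) - (y + f (v - y)) ∈ B
    have h : (x + f (u - x)) - (y + f (v - y)) = (x - y) - f (x - y) + f (u - v) := by
      simp only [map_sub]; abel
    rw [h]
    exact B.add_mem (B.sub_mem hxy (hB _ hxy)) (hB _ huv)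
  · show (x + f.symm (u - x)) - (y + f.symm (v - y)) ∈ B
    have h : (x + f.symm (u - x)) - (y + f.symm (v - y))
        = (x - y) - f.symm (x - y) + f.symm (u - v) := by
      simp only [map_sub]; abel
    rw [h]
    exact B.add_mem (B.sub_mem hxy (hB' _ hxy)) (hB' _ huv)

lemma subgroupCases9 (f : A ≃+ A)
    (hs : ∀ θ : Setoid A, (affQ f).IsCong θ → θ = ⊥ ∨ θ = ⊤)
    (B : AddSubgroup A) (hB : ∀ x ∈ B, f x ∈ B) (hB' : ∀ x ∈ B, f.symm x ∈ B) :
    (∀ x ∈ B, x = 0) ∨ (∀ x : A, x ∈ B) := by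
  rcases hs _ (cosetCong9 f B hB hB') with h | h
  · left; intro x hx
    have hr : (cosetSetoid9 B).r x 0 := by show x - 0 ∈ B; simpa using hx
    rw [h] at hr
    exact hr
  · right; intro x
    have hr : (cosetSetoid9 B).r x 0 := by rw [h]; trivial
    have hx : x - 0 ∈ B := hr
    simpa using hx

/-- The subgroup of fixed points of an additive endomorphism. -/
def fixedSub9 (H : A →+ A) : AddSubgroup A where
  carrier := {x | H x = x}
  zero_mem' := by simp
  add_mem' := by
    intro a b ha hb
    simp only [Set.mem_setOf_eq] at *
    rw [map_add, ha, hb]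
  neg_mem' := by
    intro a ha
    simp only [Set.mem_setOf_eq] at *
    rw [map_neg, ha]

lemma mem_fixedSub9 (H : A →+ A) (x : A) : x ∈ fixedSub9 H ↔ H x = x := Iff.rfl

end Aux9

theorem stmt9 (p n : ℕ) [Fact p.Prime] (hn : 1 ≤ n)
    (f : (Fin n → ZMod p) ≃+ (Fin n → ZMod p))
    (hsimple : ∀ θ : Setoid (Fin n → ZMod p), (affQ f).IsCong θ → θ = ⊥ ∨ θ = ⊤)
    (g : Equiv.Perm (Fin n → ZMod p))
    (hg : ∀ x y : Fin n → ZMod p, g (x + f (y - x)) = g x + f (g y - g x))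
    (hcop : Nat.Coprime (orderOf g) p) :
    ∃ x : Fin n → ZMod p, g x = x := by
  classical
  have hp : p.Prime := Fact.out
  haveI : NeZero p := ⟨hp.ne_zero⟩
  haveI : Fact (1 < p) := ⟨hp.one_lt⟩
  set e : Fin n → ZMod p := g 0 with he
  by_cases hfid : ∀ x : Fin n → ZMod p, f x = x
  · -- trivial quandle: derive |V| ≤ 2 and p = 2, then contradiction or fixed point
    have hLid : ∀ x u : Fin n → ZMod p, (affQ f).L x u = u := fun x u => by
      show x + f (u - x) = u
      rw [hfid]; abel
    have hLinv : ∀ x u : Fin n → ZMod p, ((affQ f).L x)⁻¹ u = u := fun x u => by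
      show x + f.symm (u - x) = u
      have hs : f.symm (u - x) = u - x := by
        apply f.injective; rw [f.apply_symm_apply, hfid]
      rw [hs]; abel
    set a1 : Fin n → ZMod p := fun _ => 1 with ha1
    have ha1ne : a1 ≠ 0 := by
      intro h
      have h0 := congrFun h ⟨0, hn⟩
      simp only [ha1, Pi.zero_apply] at h0
      exact one_ne_zero h0
    set θ : Setoid (Fin n → ZMod p) :=
      ⟨fun x y => x = y ∨ (x ≠ 0 ∧ y ≠ 0), by
        refine ⟨fun x => Or.inl rfl, ?_, ?_⟩
        · rintro x y (rfl | ⟨hx, hy⟩)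
          · exact Or.inl rfl
          · exact Or.inr ⟨hy, hx⟩
        · rintro x y z (rfl | ⟨hx, hy⟩) (rfl | ⟨hy', hz⟩)
          · exact Or.inl rfl
          · exact Or.inr ⟨hy', hz⟩
          · exact Or.inr ⟨hx, hy⟩
          · exact Or.inr ⟨hx, hz⟩⟩ with hθ
    have hcong : (affQ f).IsCong θ := by
      intro x y u v hxy huv
      constructor
      · rw [hLid, hLid]; exact huv
      · rw [hLinv, hLinv]; exact huv
    rcases hsimple θ hcong with hbot | htop
    · have hclass : ∀ x : Fin n → ZMod p, x = 0 ∨ x = a1 := by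
        intro x
        by_cases hx : x = 0
        · exact Or.inl hx
        · right
          have hr : θ.r x a1 := Or.inr ⟨hx, ha1ne⟩
          rw [hbot] at hr
          exact hr
      by_cases h0 : g 0 = 0
      · exact ⟨0, h0⟩
      · exfalso
        have hg0 : g 0 = a1 := (hclass (g 0)).resolve_left h0
        have hga1 : g a1 = 0 := by
          rcases hclass (g a1) with h | h
          · exact h
          · exfalso
            apply ha1ne
            have := g.injective (h.trans hg0.symm)
            exact this.symm ▸ rfl
        -- every c : ZMod p is 0 or 1
        have hc2 : ∀ c : ZMod p, c = 0 ∨ c = 1 := by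
          intro c
          rcases hclass (fun _ => c) with h | h
          · left; exact congrFun h ⟨0, hn⟩
          · right; exact congrFun h ⟨0, hn⟩
        have hsub : (Finset.univ : Finset (ZMod p)) ⊆ {0, 1} := by
          intro c _
          rcases hc2 c with h | h <;> simp [h]
        have hcard : p ≤ 2 := by
          calc p = Fintype.card (ZMod p) := (ZMod.card p).symm
            _ = (Finset.univ : Finset (ZMod p)).card := rfl
            _ ≤ ({0, 1} : Finset (ZMod p)).card := Finset.card_le_card hsub
            _ ≤ 2 := by
                refine le_trans (Finset.card_insert_le _ _) ?_
                simp
        have hp2 : p = 2 := le_antisymm hcard hp.two_le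
        -- g has order 2
        have hgsq : g * g = 1 := by
          apply Equiv.ext
          intro x
          rcases hclass x with rfl | rfl
          · show g (g 0) = 0
            rw [hg0, hga1]
          · show g (g a1) = a1
            rw [hga1, hg0]
        have hgne : g ≠ 1 := by
          intro h
          apply h0
          rw [h]; rfl
        have hord : orderOf g = 2 := by
          have : g ^ 2 = 1 := by rw [pow_two]; exact hgsq
          exact orderOf_eq_prime this hgne
        rw [hord, hp2] at hcop
        exact absurd hcop (by decide)
    · exfalso
      have hr : θ.r 0 a1 := by rw [htop]; trivial
      rcases hr with h | ⟨h, _⟩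
      · exact ha1ne h.symm
      · exact h rfl
  · -- nontrivial f: it has no nonzero fixed points
    push_neg at hfid
    obtain ⟨x0, hx0⟩ := hfid
    have hfix : ∀ x : Fin n → ZMod p, f x = x → x = 0 := by
      rcases subgroupCases9 f hsimple (fixedSub9 f.toAddMonoidHom)
          (fun x hx => by
            have hx' : f x = x := hx
            show f (f x) = f x
            simp only [hx'])
          (fun x hx => by
            have hx' : f x = x := hx
            have h2 : f.symm x = x := by
              conv_lhs => rw [← hx']
              rw [f.symm_apply_apply]
            show f (f.symm x) = f.symm x
            rw [h2, hx']) with h | h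
      · exact fun x hx => h x hx
      · exact absurd (h x0) hx0
    -- s := id - f is injective, hence surjective
    set S : (Fin n → ZMod p) →+ (Fin n → ZMod p) :=
      AddMonoidHom.id _ - f.toAddMonoidHom with hS
    have hSapp : ∀ x, S x = x - f x := fun x => rfl
    have hSinj : Function.Injective S := by
      intro a b hab
      rw [hSapp, hSapp] at hab
      have h1 : f (a - b) = a - b := by
        rw [map_sub]
        linear_combination -hab
      have := hfix _ h1
      exact sub_eq_zero.mp this
    have hSsurj : Function.Surjective S :=
      (Finite.injective_iff_surjective).mp hSinj
    -- affine structure of g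
    have claim1 : ∀ x, g (x - f x) = g x - f (g x) + f e := by
      intro x
      have h := hg x 0
      have h1 : x + f (0 - x) = x - f x := by
        rw [zero_sub, map_neg]; abel
      rw [h1] at h
      rw [h, map_sub, ← he]
      abel
    have claim2 : ∀ u y, g (u + f y) = g u + f (g y) - f e := by
      intro u y
      obtain ⟨x, hx⟩ := hSsurj u
      rw [hSapp] at hx
      have h := hg x y
      have h1 : x + f (y - x) = u + f y := by
        rw [map_sub, ← hx]; abel
      rw [h1] at h
      rw [h, map_sub, ← hx, claim1 x]
      abel
    have claim3 : ∀ y, g (f y) = e + f (g y) - f e := by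
      intro y
      have := claim2 0 y
      rw [zero_add] at this
      rw [this, ← he]
    have claim4 : ∀ u z, g (u + z) = g u + g z - e := by
      intro u z
      have h2 := claim2 u (f.symm z)
      rw [f.apply_symm_apply] at h2
      have h3 := claim3 (f.symm z)
      rw [f.apply_symm_apply] at h3
      rw [h2]
      linear_combination -h3
    set H : (Fin n → ZMod p) →+ (Fin n → ZMod p) :=
      AddMonoidHom.mk' (fun x => g x - e)
        (fun a b => by
          show g (a + b) - e = (g a - e) + (g b - e)
          rw [claim4]; abel) with hH
    have hHapp : ∀ x, H x = g x - e := fun x => rfl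
    have hHf : ∀ y, H (f y) = f (H y) := by
      intro y
      rw [hHapp, hHapp, claim3, map_sub]
      abel
    rcases subgroupCases9 f hsimple (fixedSub9 H)
        (fun x hx => by
          have hx' : H x = x := hx
          show H (f x) = f x
          rw [hHf, hx'])
        (fun x hx => by
          have hx' : H x = x := hx
          show H (f.symm x) = f.symm x
          apply f.injective
          rw [← hHf, f.apply_symm_apply, hx']) with hc | hc
    · -- id - H injective, so surjective: solve x - H x = e
      set T : (Fin n → ZMod p) →+ (Fin n → ZMod p) :=
        AddMonoidHom.id _ - H with hT
      have hTapp : ∀ x, T x = x - H x := fun x => rfl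
      have hTinj : Function.Injective T := by
        intro a b hab
        rw [hTapp, hTapp] at hab
        have h1 : H (a - b) = a - b := by
          rw [map_sub]
          linear_combination -hab
        have := hc _ h1
        exact sub_eq_zero.mp this
      obtain ⟨x, hx⟩ := (Finite.injective_iff_surjective).mp hTinj e
      rw [hTapp, hHapp] at hx
      refine ⟨x, ?_⟩
      linear_combination -hx
    · -- H = id, so g is translation by e; coprimality forces e = 0
      have hgx : ∀ x, g x = x + e := by
        intro x
        have h2 : H x = x := hc x
        rw [hHapp] at h2
        linear_combination h2
      have hpow : ∀ k : ℕ, (g ^ k) 0 = k • e := by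
        intro k
        induction k with
        | zero => simp
        | succ k ih =>
            rw [pow_succ']
            show g ((g ^ k) 0) = (k + 1) • e
            rw [ih, hgx, succ_nsmul]
      have hm : (orderOf g) • e = 0 := by
        have := hpow (orderOf g)
        rw [pow_orderOf_eq_one] at this
        exact this.symm.trans rfl
      have hpe : p • e = 0 := by
        funext i
        simp [nsmul_eq_mul, ZMod.natCast_self]
      have hd1 : addOrderOf e ∣ orderOf g := addOrderOf_dvd_of_nsmul_eq_zero hm
      have hd2 : addOrderOf e ∣ p := addOrderOf_dvd_of_nsmul_eq_zero hpe
      have : addOrderOf e ∣ 1 := hcop ▸ Nat.dvd_gcd hd1 hd2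
      have he0 : e = 0 := by
        have h1 := Nat.dvd_one.mp this
        rwa [AddMonoid.addOrderOf_eq_one_iff] at h1
      exact ⟨0, by rw [hgx, zero_add, he0]⟩
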